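/- Let N ≥ 2 be an integer, τ > 0, and let b₁, …, b_N and k₁, …, k_{N-1} be real numbers satisfying: k₁ = -τ·b₁; k_i = k_{i-1} - τ·b_i for every i with 2 ≤ i ≤ N - 1; and k_{N-1} = τ·b_N. Suppose b₁ < 0, b_N > 0, and there exists an index s with 2 ≤ s ≤ N such that b_i ≤ 0 for all i < s and b_i ≥ 0 for all i ≥ s. Then k_i > 0 for every i = 1, …, N - 1. -/
import Mathlib


/-- Discrete content of Proposition B.1: under the transmission relations
`k₁ = -τ b₁`, `kᵢ = kᵢ₋₁ - τ bᵢ` (`2 ≤ i ≤ N-1`), `k_{N-1} = τ b_N`, with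
`b₁ < 0 < b_N` and `b` nonpositive before some index `s` and nonnegative from
it on, all the slopes `kᵢ` (`1 ≤ i ≤ N-1`) are positive. -/
theorem stmt16 (N : ℕ) (hN : 2 ≤ N) (τ : ℝ) (hτ : 0 < τ)
    (b k : ℕ → ℝ)
    (hk1 : k 1 = -τ * b 1)
    (hki : ∀ i : ℕ, 2 ≤ i → i ≤ N - 1 → k i = k (i - 1) - τ * b i)
    (hkN : k (N - 1) = τ * b N)
    (hb1 : b 1 < 0) (hbN : 0 < b N)
    (hs : ∃ s : ℕ, 2 ≤ s ∧ s ≤ N ∧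
      (∀ i : ℕ, 1 ≤ i → i < s → b i ≤ 0) ∧
      (∀ i : ℕ, s ≤ i → i ≤ N → 0 ≤ b i)) :
    ∀ i : ℕ, 1 ≤ i → i ≤ N - 1 → 0 < k i := by
  obtain ⟨s, hs2, hsN, hneg, hpos⟩ := hs
  -- forward: positive up to s-1
  have fwd : ∀ i : ℕ, 1 ≤ i → i ≤ N - 1 → i < s → 0 < k i := by
    intro i
    induction i with
    | zero => omega
    | succ i ih =>
      intro h1 h2 h3
      rcases Nat.eq_zero_or_pos i with hi0 | hi1
      · subst hi0
        rw [hk1]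
        nlinarith
      · have h2i : 2 ≤ i + 1 := by omega
        have hrec := hki (i + 1) h2i h2
        simp only [Nat.add_sub_cancel] at hrec
        have hb : b (i + 1) ≤ 0 := hneg (i + 1) (by omega) h3
        have hki' : 0 < k i := ih hi1 (by omega) (by omega)
        rw [hrec]
        nlinarith
  -- backward: positive from s-1 on, expressed via d = N-1-i
  have back : ∀ d : ℕ, s - 1 ≤ N - 1 - d → 0 < k (N - 1 - d) := by
    intro d
    induction d with
    | zero =>
      intro _
      simp only [Nat.sub_zero]
      rw [hkN]; positivity
    | succ d ih =>
      intro hle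
      have h1 : 1 ≤ N - 1 - (d + 1) := by omega
      have hN1 : d + 2 ≤ N - 1 := by omega
      set i := N - 1 - (d + 1) with hi
      have hi1 : N - 1 - d = i + 1 := by omega
      have hrec := hki (i + 1) (by omega) (by omega)
      simp only [Nat.add_sub_cancel] at hrec
      have hb : 0 ≤ b (i + 1) := hpos (i + 1) (by omega) (by omega)
      have hk' : 0 < k (i + 1) := by rw [← hi1]; exact ih (by omega)
      rw [hrec] at hk'
      nlinarith
  intro i h1 h2
  by_cases hlt : i < s
  · exact fwd i h1 h2 hlt
  · have h := back (N - 1 - i) (by omega)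
    have heq : N - 1 - (N - 1 - i) = i := by omega
    rwa [heq] at h
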